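/- Let m ≥ 1 and x ≥ m be integers, μ > 0 and r > 0 reals with r ≠ m, λ = r·μ, and ρ = r/m. Then B_{m,x}(r) − B_{m,x+1}(r) > 0, m − r + r·B_m(r) ≠ 0, and, with C_m(r) = m·B_m(r)/(m − r + r·B_m(r)), one has (1/λ)·(L_{m,x+1}(r) − L_{m,x}(r)) / (B_{m,x}(r) − B_{m,x+1}(r)) = ρ·C_m(r)·(ρ^{x−m+1} − 1)/(m·μ·(ρ−1)^2) − (x+1−r)/(m·μ·(ρ−1)). -/

import Mathlib

/-- `a_j(r)` coefficients of the M/M/m/n queue. -/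
noncomputable def aCoef (m j : ℕ) (r : ℝ) : ℝ :=
  if j ≤ m then r ^ j / (Nat.factorial j : ℝ)
  else (r ^ m / (Nat.factorial m : ℝ)) * (r / (m : ℝ)) ^ (j - m)

/-- Blocking probability `B_{m,n}(r)` of the M/M/m/n queue with offered load `r`. -/
noncomputable def Bmn (m n : ℕ) (r : ℝ) : ℝ :=
  aCoef m n r / ∑ j ∈ Finset.range (n + 1), aCoef m j r

/-- Mean number in system `L_{m,n}(r)` of the M/M/m/n queue with offered load `r`. -/
noncomputable def Lmn (m n : ℕ) (r : ℝ) : ℝ :=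
  (∑ j ∈ Finset.range (n + 1), (j : ℝ) * aCoef m j r) /
    ∑ j ∈ Finset.range (n + 1), aCoef m j r

/-- Erlang-B formula `B_m(r)`. -/
noncomputable def erlangB (m : ℕ) (r : ℝ) : ℝ :=
  (r ^ m / (Nat.factorial m : ℝ)) / ∑ j ∈ Finset.range (m + 1), r ^ j / (Nat.factorial j : ℝ)

lemma aCoef_of_le {m j : ℕ} (h : j ≤ m) (r : ℝ) :
    aCoef m j r = r ^ j / (Nat.factorial j : ℝ) := if_pos h

lemma aCoef_add (m k : ℕ) (r : ℝ) :
    aCoef m (m + k) r = (r ^ m / (Nat.factorial m : ℝ)) * (r / (m : ℝ)) ^ k := by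
  cases k with
  | zero => simp [aCoef]
  | succ k =>
      have h : ¬ (m + (k + 1) ≤ m) := by omega
      simp only [aCoef, if_neg h, Nat.add_sub_cancel_left]

lemma sum_j_pow_div_fact (r : ℝ) (m : ℕ) :
    ∑ j ∈ Finset.range (m + 1), (j : ℝ) * (r ^ j / (Nat.factorial j : ℝ)) =
      r * ∑ j ∈ Finset.range m, r ^ j / (Nat.factorial j : ℝ) := by
  induction m with
  | zero => simp
  | succ m ih =>
    rw [Finset.sum_range_succ, ih, Finset.sum_range_succ]
    have hf : (Nat.factorial m : ℝ) ≠ 0 := by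
      exact_mod_cast (Nat.factorial_pos m).ne'
    have h : (Nat.factorial (m + 1) : ℝ) = ((m : ℝ) + 1) * (Nat.factorial m : ℝ) := by
      push_cast [Nat.factorial_succ]; ring
    rw [h]
    have hm1 : ((m : ℝ) + 1) ≠ 0 := by positivity
    field_simp
    push_cast
    ring

lemma geomG (ρ : ℝ) (n : ℕ) :
    (ρ - 1) * ∑ k ∈ Finset.range (n + 1), ρ ^ k = ρ ^ (n + 1) - 1 := by
  induction n with
  | zero => simp
  | succ n ih => rw [Finset.sum_range_succ, mul_add, ih]; ring

lemma geomH (ρ : ℝ) (n : ℕ) :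
    (ρ - 1) ^ 2 * ∑ k ∈ Finset.range (n + 1), (k : ℝ) * ρ ^ k =
      (n : ℝ) * ρ ^ (n + 2) - ((n : ℝ) + 1) * ρ ^ (n + 1) + ρ := by
  induction n with
  | zero => simp
  | succ n ih =>
      rw [Finset.sum_range_succ, mul_add, ih]
      push_cast
      ring

lemma sumS (m : ℕ) (r : ℝ) (n : ℕ) :
    ∑ j ∈ Finset.range (m + n + 1), aCoef m j r =
      (∑ j ∈ Finset.range m, r ^ j / (Nat.factorial j : ℝ)) +
        (r ^ m / (Nat.factorial m : ℝ)) * ∑ k ∈ Finset.range (n + 1), (r / (m : ℝ)) ^ k := by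
  induction n with
  | zero =>
      rw [Finset.sum_range_succ]
      rw [Finset.sum_congr rfl fun j hj => aCoef_of_le (by
        exact Nat.le_of_lt (Finset.mem_range.mp hj)) r]
      rw [aCoef_of_le (le_refl m) r]
      simp
  | succ n ih =>
      have h1 : m + (n + 1) + 1 = (m + n + 1) + 1 := by omega
      rw [h1, Finset.sum_range_succ, ih]
      have h2 : m + n + 1 = m + (n + 1) := by omega
      rw [h2, aCoef_add, Finset.sum_range_succ _ (n + 1)]
      ring

lemma sumT (m : ℕ) (r : ℝ) (n : ℕ) :
    ∑ j ∈ Finset.range (m + n + 1), (j : ℝ) * aCoef m j r =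
      r * (∑ j ∈ Finset.range m, r ^ j / (Nat.factorial j : ℝ)) - (m : ℝ) * (r ^ m / (Nat.factorial m : ℝ)) +
        (r ^ m / (Nat.factorial m : ℝ)) *
          ∑ k ∈ Finset.range (n + 1), ((m : ℝ) + (k : ℝ)) * (r / (m : ℝ)) ^ k := by
  induction n with
  | zero =>
      rw [Finset.sum_congr rfl fun j hj => by
        rw [aCoef_of_le (by exact Nat.le_of_lt_succ (by simpa using Finset.mem_range.mp hj)) r]]
      rw [sum_j_pow_div_fact]
      simp
      ring
  | succ n ih =>
      have h1 : m + (n + 1) + 1 = (m + n + 1) + 1 := by omega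
      rw [h1, Finset.sum_range_succ, ih]
      have h2 : m + n + 1 = m + (n + 1) := by omega
      rw [h2, aCoef_add, Finset.sum_range_succ _ (n + 1)]
      push_cast
      ring

set_option maxHeartbeats 1600000

/-- closed formula for the second-order RB index when `x ≥ m` and `ρ ≠ 1`. -/
theorem stmt_2 (m x : ℕ) (hm : 1 ≤ m) (hx : m ≤ x) (μ r : ℝ) (hμ : 0 < μ) (hr : 0 < r)
    (hrm : r ≠ (m : ℝ)) (lam ρ : ℝ) (hlam : lam = r * μ) (hρ : ρ = r / (m : ℝ)) :
    0 < Bmn m x r - Bmn m (x + 1) r ∧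
    (m : ℝ) - r + r * erlangB m r ≠ 0 ∧
    (1 / lam) * (Lmn m (x + 1) r - Lmn m x r) / (Bmn m x r - Bmn m (x + 1) r) =
      ρ * ((m : ℝ) * erlangB m r / ((m : ℝ) - r + r * erlangB m r)) * (ρ ^ (x - m + 1) - 1) /
          ((m : ℝ) * μ * (ρ - 1) ^ 2)
        - ((x : ℝ) + 1 - r) / ((m : ℝ) * μ * (ρ - 1)) := by
  obtain ⟨n, rfl⟩ : ∃ n, x = m + n := ⟨x - m, by omega⟩
  have hmpos : (0 : ℝ) < m := by exact_mod_cast hm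
  have hm0 : (m : ℝ) ≠ 0 := hmpos.ne'
  have hfac : (0 : ℝ) < (Nat.factorial m : ℝ) := by exact_mod_cast Nat.factorial_pos m
  set P := ∑ j ∈ Finset.range m, r ^ j / (Nat.factorial j : ℝ) with hPdef
  set A := r ^ m / (Nat.factorial m : ℝ) with hAdef
  have hρ0 : 0 < ρ := by rw [hρ]; positivity
  have hρ1 : ρ - 1 ≠ 0 := by
    rw [hρ]
    intro h
    apply hrm
    have h2 : r / (m : ℝ) = 1 := by linarith [sub_eq_zero.mp h]
    field_simp at h2
    exact h2
  have hrρ : r = (m : ℝ) * ρ := by rw [hρ]; field_simp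
  have hPpos : 0 < P := by
    apply Finset.sum_pos (fun j hj => by positivity)
    exact ⟨0, Finset.mem_range.mpr (by omega)⟩
  have hApos : 0 < A := by rw [hAdef]; positivity
  -- closed forms of geometric sums
  have hGc : ∑ k ∈ Finset.range (n + 1), ρ ^ k = (ρ ^ (n + 1) - 1) / (ρ - 1) := by
    rw [eq_div_iff hρ1]
    linarith [geomG ρ n]
  have hGc1 : ∑ k ∈ Finset.range (n + 1 + 1), ρ ^ k = (ρ ^ (n + 2) - 1) / (ρ - 1) := by
    rw [eq_div_iff hρ1]
    have h := geomG ρ (n + 1)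
    rw [show n + 1 + 1 = n + 2 from by omega] at h
    linarith [h]
  have hρ1sq : (ρ - 1) ^ 2 ≠ 0 := pow_ne_zero 2 hρ1
  have hHc : ∑ k ∈ Finset.range (n + 1), (k : ℝ) * ρ ^ k =
      ((n : ℝ) * ρ ^ (n + 2) - ((n : ℝ) + 1) * ρ ^ (n + 1) + ρ) / (ρ - 1) ^ 2 := by
    rw [eq_div_iff hρ1sq]
    linarith [geomH ρ n]
  have hHc1 : ∑ k ∈ Finset.range (n + 1 + 1), (k : ℝ) * ρ ^ k =
      (((n : ℝ) + 1) * ρ ^ (n + 3) - ((n : ℝ) + 2) * ρ ^ (n + 2) + ρ) / (ρ - 1) ^ 2 := by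
    rw [eq_div_iff hρ1sq]
    have h := geomH ρ (n + 1)
    rw [show n + 1 + 2 = n + 3 from by omega, show n + 1 + 1 = n + 2 from by omega] at h
    push_cast at h
    linarith [h]
  have hW : ∀ N : ℕ, ∑ k ∈ Finset.range N, ((m : ℝ) + (k : ℝ)) * ρ ^ k =
      (m : ℝ) * (∑ k ∈ Finset.range N, ρ ^ k) + ∑ k ∈ Finset.range N, (k : ℝ) * ρ ^ k := by
    intro N
    rw [Finset.mul_sum, ← Finset.sum_add_distrib]
    exact Finset.sum_congr rfl fun k _ => by ring
  -- sums in closed form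
  have hSx : ∑ j ∈ Finset.range (m + n + 1), aCoef m j r =
      P + A * ((ρ ^ (n + 1) - 1) / (ρ - 1)) := by
    rw [sumS m r n, ← hρ, hGc]
  have hSx1 : ∑ j ∈ Finset.range (m + n + 1 + 1), aCoef m j r =
      P + A * ((ρ ^ (n + 2) - 1) / (ρ - 1)) := by
    have h := sumS m r (n + 1)
    rw [show m + (n + 1) + 1 = m + n + 1 + 1 from by omega, ← hρ, hGc1] at h
    exact h
  have hTx : ∑ j ∈ Finset.range (m + n + 1), (j : ℝ) * aCoef m j r =
      r * P - (m : ℝ) * A +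
        A * ((m : ℝ) * ((ρ ^ (n + 1) - 1) / (ρ - 1)) +
          ((n : ℝ) * ρ ^ (n + 2) - ((n : ℝ) + 1) * ρ ^ (n + 1) + ρ) / (ρ - 1) ^ 2) := by
    rw [sumT m r n, ← hρ, hW, hGc, hHc]
  have hTx1 : ∑ j ∈ Finset.range (m + n + 1 + 1), (j : ℝ) * aCoef m j r =
      r * P - (m : ℝ) * A +
        A * ((m : ℝ) * ((ρ ^ (n + 2) - 1) / (ρ - 1)) +
          (((n : ℝ) + 1) * ρ ^ (n + 3) - ((n : ℝ) + 2) * ρ ^ (n + 2) + ρ) / (ρ - 1) ^ 2) := by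
    have h := sumT m r (n + 1)
    rw [show m + (n + 1) + 1 = m + n + 1 + 1 from by omega, ← hρ, hW, hGc1, hHc1] at h
    exact h
  -- positivity of the sums
  have haCoef_pos : ∀ j, 0 < aCoef m j r := by
    intro j
    unfold aCoef
    split
    · positivity
    · positivity
  have hSxpos : 0 < P + A * ((ρ ^ (n + 1) - 1) / (ρ - 1)) := by
    rw [← hSx]
    exact Finset.sum_pos (fun j _ => haCoef_pos j) (by simp)
  have hSx1pos : 0 < P + A * ((ρ ^ (n + 2) - 1) / (ρ - 1)) := by
    rw [← hSx1]
    exact Finset.sum_pos (fun j _ => haCoef_pos j) (by simp)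
  -- positivity of (1-ρ)P + A
  have key : ∑ j ∈ Finset.range (m + 1), ((m : ℝ) - (j : ℝ)) * (r ^ j / (Nat.factorial j : ℝ)) =
      (m : ℝ) * (P + A) - r * P := by
    rw [Finset.sum_congr rfl fun (j : ℕ) _ => show ((m : ℝ) - (j : ℝ)) * (r ^ j / (Nat.factorial j : ℝ)) =
        (m : ℝ) * (r ^ j / (Nat.factorial j : ℝ)) - (j : ℝ) * (r ^ j / (Nat.factorial j : ℝ)) from by ring]
    rw [Finset.sum_sub_distrib, ← Finset.mul_sum, sum_j_pow_div_fact, Finset.sum_range_succ]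
    try rw [← hPdef, ← hAdef]
    try ring
  have keypos : 0 < ∑ j ∈ Finset.range (m + 1), ((m : ℝ) - (j : ℝ)) * (r ^ j / (Nat.factorial j : ℝ)) := by
    apply Finset.sum_pos'
    · intro j hj
      have hjm : (j : ℝ) ≤ (m : ℝ) := by
        exact_mod_cast Nat.le_of_lt_succ (Finset.mem_range.mp hj)
      have : (0 : ℝ) ≤ (m : ℝ) - (j : ℝ) := by linarith
      positivity
    · refine ⟨0, Finset.mem_range.mpr (by omega), ?_⟩
      simpa using hmpos
  have hDpos : 0 < (1 - ρ) * P + A := by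
    have hmD : (m : ℝ) * ((1 - ρ) * P + A) = (m : ℝ) * (P + A) - r * P := by
      rw [hrρ]; ring
    nlinarith [keypos, key, hmD, hmpos]
  -- the aCoef values at x and x+1
  have hax : aCoef m (m + n) r = A * ρ ^ n := by
    rw [aCoef_add, ← hρ, ← hAdef]
  have hax1 : aCoef m (m + n + 1) r = A * ρ ^ (n + 1) := by
    rw [show m + n + 1 = m + (n + 1) from by omega, aCoef_add, ← hρ, ← hAdef]
  -- part 1
  have hB : Bmn m (m + n) r - Bmn m (m + n + 1) r =
      A * ρ ^ n * ((1 - ρ) * P + A) /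
        ((P + A * ((ρ ^ (n + 1) - 1) / (ρ - 1))) * (P + A * ((ρ ^ (n + 2) - 1) / (ρ - 1)))) := by
    rw [Bmn, Bmn, hax, hax1, hSx, hSx1]
    rw [div_sub_div _ _ hSxpos.ne' hSx1pos.ne']
    congr 1
    field_simp
    try ring
  have part1 : 0 < Bmn m (m + n) r - Bmn m (m + n + 1) r := by
    rw [hB]
    apply div_pos
    · have := pow_pos hρ0 n
      positivity
    · exact mul_pos hSxpos hSx1pos
  -- part 2
  have hEB : erlangB m r = A / (P + A) := by
    rw [erlangB, Finset.sum_range_succ, ← hPdef, ← hAdef]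
  have hPA : 0 < P + A := add_pos hPpos hApos
  have hDen : (m : ℝ) - r + r * erlangB m r = (m : ℝ) * ((1 - ρ) * P + A) / (P + A) := by
    rw [hEB, hrρ]
    field_simp
    ring
  have part2 : (m : ℝ) - r + r * erlangB m r ≠ 0 := by
    rw [hDen]
    exact (div_pos (mul_pos hmpos hDpos) hPA).ne'
  refine ⟨part1, part2, ?_⟩
  -- part 3
  have hL : Lmn m (m + n + 1) r - Lmn m (m + n) r =
      A * ρ ^ (n + 1) *
        (((m : ℝ) + (n : ℝ) + 1 - r) * P + (m : ℝ) * A +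
          A * (((n : ℝ) + 1) * ((ρ ^ (n + 1) - 1) / (ρ - 1)) -
            ((n : ℝ) * ρ ^ (n + 2) - ((n : ℝ) + 1) * ρ ^ (n + 1) + ρ) / (ρ - 1) ^ 2)) /
        ((P + A * ((ρ ^ (n + 2) - 1) / (ρ - 1))) * (P + A * ((ρ ^ (n + 1) - 1) / (ρ - 1)))) := by
    rw [Lmn, Lmn, hTx, hTx1, hSx, hSx1]
    rw [div_sub_div _ _ hSx1pos.ne' hSxpos.ne']
    congr 1
    field_simp
    try ring
  have hBne : Bmn m (m + n) r - Bmn m (m + n + 1) r ≠ 0 := part1.ne'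
  have hRatio : (Lmn m (m + n + 1) r - Lmn m (m + n) r) / (Bmn m (m + n) r - Bmn m (m + n + 1) r) =
      (A * ρ ^ (n + 1) *
        (((m : ℝ) + (n : ℝ) + 1 - r) * P + (m : ℝ) * A +
          A * (((n : ℝ) + 1) * ((ρ ^ (n + 1) - 1) / (ρ - 1)) -
            ((n : ℝ) * ρ ^ (n + 2) - ((n : ℝ) + 1) * ρ ^ (n + 1) + ρ) / (ρ - 1) ^ 2))) /
        (A * ρ ^ n * ((1 - ρ) * P + A)) := by
    rw [hL, hB, div_div_div_comm]
    rw [show (P + A * ((ρ ^ (n + 2) - 1) / (ρ - 1))) * (P + A * ((ρ ^ (n + 1) - 1) / (ρ - 1))) =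
        (P + A * ((ρ ^ (n + 1) - 1) / (ρ - 1))) * (P + A * ((ρ ^ (n + 2) - 1) / (ρ - 1))) from
      mul_comm _ _]
    rw [div_self (mul_ne_zero hSxpos.ne' hSx1pos.ne'), div_one]
  rw [mul_div_assoc, hRatio, hDen, hEB, hlam]
  rw [show m + n - m + 1 = n + 1 from by omega]
  push_cast
  rw [hrρ]
  have hρn : ρ ^ n ≠ 0 := pow_ne_zero n hρ0.ne'
  field_simp [hμ.ne', hm0, hρ1, hρ0.ne', hApos.ne', hPA.ne', hDpos.ne', hρn]
  have hD' : P * (1 - ρ) + A ≠ 0 := by rw [mul_comm]; exact hDpos.ne'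
  field_simp
  ring
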